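/- Let 𝐦 and 𝐧 be strictly increasing sequences of positive integers whose symmetric difference (as subsets of ℕ) is infinite. Then there exist a Banach space X and a 1-unconditional basis 𝓑 of X that is 1-(𝐧, PSLC) but is not (𝐦, conservative) (and hence not democratic). -/

import Mathlib

open scoped BigOperators ENNReal NNReal

/-- The collection `𝕋(𝐧)`: pairs of finite sets `(A, D)` with `A ⊆ 𝐧`, `|A| ≤ |D|`
and `A < D ∩ 𝐧`. -/
def TPair (seq : ℕ → ℕ) (A D : Finset ℕ) : Prop :=
  (↑A : Set ℕ) ⊆ Set.range seq ∧ A.card ≤ D.card ∧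
    ∀ a ∈ A, ∀ d ∈ D, d ∈ Set.range seq → a < d

/-- The collection `𝕊(𝐧)`: pairs of finite sets `(A, D)` with `A ⊆ 𝐧` and `|A| ≤ |D|`. -/
def SPair (seq : ℕ → ℕ) (A D : Finset ℕ) : Prop :=
  (↑A : Set ℕ) ⊆ Set.range seq ∧ A.card ≤ D.card

/-- The interval `{n_{k+1}, …, n_{k+m}}` of `m` consecutive terms of the sequence `seq`
(0-indexed: `seq k, …, seq (k+m-1)`). -/
def intervalSet (seq : ℕ → ℕ) (k m : ℕ) : Finset ℕ :=
  (Finset.range m).image fun i => seq (k + i)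

/-- The (1-based) index `ι(max A)` of the largest element of `A` in the sequence `seq`
(`0` if `A` is empty). -/
noncomputable def iotaMax (seq : ℕ → ℕ) (A : Finset ℕ) : ℕ :=
  if h : A.Nonempty then sInf {i | seq i = A.max' h} + 1 else 0

/-- The collection `𝕋^ω(𝐧)`: pairs of finite sets `(A, D)` with `A ⊆ 𝐧`, `ω(A) ≤ ω(D)`
and `A < D ∩ 𝐧`. -/
def WTPair (w : Set ℕ → ℝ≥0∞) (seq : ℕ → ℕ) (A D : Finset ℕ) : Prop :=
  (↑A : Set ℕ) ⊆ Set.range seq ∧ w (↑A : Set ℕ) ≤ w (↑D : Set ℕ) ∧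
    ∀ a ∈ A, ∀ d ∈ D, d ∈ Set.range seq → a < d

/-- A (semi-normalized) basis `(e_n)` of a Banach space `X`, together with its biorthogonal
functionals `(e_n^*)`: the span of the `e_n` is norm-dense, `e_j^*(e_k) = δ_{jk}`, and the
norms of the `e_n` and `e_n^*` are bounded above and away from zero. -/
structure BasisOf (𝕜 : Type*) (X : Type*) [RCLike 𝕜] [NormedAddCommGroup X]
    [NormedSpace 𝕜 X] where
  e : ℕ → X
  coord : ℕ → X →L[𝕜] 𝕜
  dense_span : Dense (↑(Submodule.span 𝕜 (Set.range e)) : Set X)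
  biorth : ∀ j k : ℕ, coord j (e k) = if j = k then (1 : 𝕜) else 0
  norm_bounds : ∃ c₁ c₂ : ℝ, 0 < c₁ ∧ (∀ n, c₁ ≤ ‖e n‖ ∧ c₁ ≤ ‖coord n‖) ∧
    ∀ n, ‖e n‖ ≤ c₂ ∧ ‖coord n‖ ≤ c₂

namespace BasisOf

variable {𝕜 : Type*} {X : Type*} [RCLike 𝕜] [NormedAddCommGroup X] [NormedSpace 𝕜 X]
variable (B : BasisOf 𝕜 X)

/-- The projection `P_A(x) = ∑_{n ∈ A} e_n^*(x) e_n`. -/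
noncomputable def proj (A : Finset ℕ) (x : X) : X := ∑ n ∈ A, B.coord n x • B.e n

/-- `1_{εA} = ∑_{n ∈ A} ε_n e_n`. -/
noncomputable def sgnSum (ε : ℕ → 𝕜) (A : Finset ℕ) : X := ∑ n ∈ A, ε n • B.e n

/-- `1_A = ∑_{n ∈ A} e_n`. -/
noncomputable def ones (A : Finset ℕ) : X := ∑ n ∈ A, B.e n

/-- `P^𝐧_m(x) = ∑_{i=1}^m e_{n_i}^*(x) e_{n_i}`, the projection on the first `m` terms of the
subsequence given by `seq`. -/
noncomputable def projSeq (seq : ℕ → ℕ) (m : ℕ) (x : X) : X :=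
  ∑ i ∈ Finset.range m, B.coord (seq i) x • B.e (seq i)

/-- `A` is a greedy set of `x`: the coefficients inside `A` dominate those outside. -/
def IsGreedySet (x : X) (A : Finset ℕ) : Prop :=
  ∀ a ∈ A, ∀ b ∉ A, ‖B.coord b x‖ ≤ ‖B.coord a x‖

/-- The support `{n : e_n^*(x) ≠ 0}`. -/
def supp (x : X) : Set ℕ := {n | B.coord n x ≠ 0}

/-- `𝓑` is `C`-(`𝐧`, strong partially greedy):
`‖x - G_m(x)‖ ≤ C ⋅ σ̂^𝐧_m(x)` for all `x`, all `m ≥ 1` and all greedy sums. -/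
def SPGWith (seq : ℕ → ℕ) (C : ℝ) : Prop :=
  ∀ x : X, ∀ m : ℕ, 1 ≤ m → ∀ A : Finset ℕ, A.card = m → B.IsGreedySet x A →
    ∀ k : ℕ, k ≤ m → ‖x - B.proj A x‖ ≤ C * ‖x - B.projSeq seq k x‖

/-- `𝓑` is (`𝐧`, strong partially greedy). -/
def SPG (seq : ℕ → ℕ) : Prop := ∃ C : ℝ, 1 ≤ C ∧ B.SPGWith seq C

/-- `𝓑` is quasi-greedy with constant `C`. -/
def QuasiGreedyWith (C : ℝ) : Prop :=
  ∀ x : X, ∀ A : Finset ℕ, A.Nonempty → B.IsGreedySet x A → ‖B.proj A x‖ ≤ C * ‖x‖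

/-- `𝓑` is quasi-greedy. -/
def QuasiGreedy : Prop := ∃ C : ℝ, B.QuasiGreedyWith C

/-- `𝓑` is suppression quasi-greedy with constant `C`. -/
def SuppQGWith (C : ℝ) : Prop :=
  ∀ x : X, ∀ A : Finset ℕ, A.Nonempty → B.IsGreedySet x A → ‖x - B.proj A x‖ ≤ C * ‖x‖

/-- `𝓑` is `C`-(`𝐧`, PSLC). -/
def PSLCWith (seq : ℕ → ℕ) (C : ℝ) : Prop :=
  ∀ x : X, (∀ n, ‖B.coord n x‖ ≤ 1) → ∀ A D : Finset ℕ, TPair seq A D →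
    (∀ d ∈ D, B.coord d x = 0) →
    (∀ a ∈ A, ∀ j : ℕ, (j ∈ D ∨ B.coord j x ≠ 0) → j ∈ Set.range seq → a < j) →
    ∀ ε δ : ℕ → 𝕜, (∀ n, ‖ε n‖ = 1) → (∀ n, ‖δ n‖ = 1) →
      ‖x + B.sgnSum ε A‖ ≤ C * ‖x + B.sgnSum δ D‖

/-- `𝓑` is (`𝐧`, PSLC). -/
def PSLC (seq : ℕ → ℕ) : Prop := ∃ C : ℝ, 1 ≤ C ∧ B.PSLCWith seq C

/-- `𝓑` is (`𝐧`, superconservative) with constant `C`. -/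
def SuperconservativeWith (seq : ℕ → ℕ) (C : ℝ) : Prop :=
  ∀ A D : Finset ℕ, TPair seq A D →
    ∀ ε δ : ℕ → 𝕜, (∀ n, ‖ε n‖ = 1) → (∀ n, ‖δ n‖ = 1) →
      ‖B.sgnSum ε A‖ ≤ C * ‖B.sgnSum δ D‖

/-- `𝓑` is (`𝐧`, superconservative). -/
def Superconservative (seq : ℕ → ℕ) : Prop :=
  ∃ C : ℝ, 0 < C ∧ B.SuperconservativeWith seq C

/-- `𝓑` is (`𝐧`, conservative) with constant `C`. -/
def ConservativeWith (seq : ℕ → ℕ) (C : ℝ) : Prop :=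
  ∀ A D : Finset ℕ, TPair seq A D → ‖B.ones A‖ ≤ C * ‖B.ones D‖

/-- `𝓑` is (`𝐧`, conservative). -/
def Conservative (seq : ℕ → ℕ) : Prop := ∃ C : ℝ, 0 < C ∧ B.ConservativeWith seq C

/-- `𝓑` is (`𝐧`, democratic) with constant `C`. -/
def DemocraticWith (seq : ℕ → ℕ) (C : ℝ) : Prop :=
  ∀ A D : Finset ℕ, SPair seq A D → ‖B.ones A‖ ≤ C * ‖B.ones D‖

/-- `𝓑` is (`𝐧`, democratic). -/
def Democratic (seq : ℕ → ℕ) : Prop := ∃ C : ℝ, B.DemocraticWith seq C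

/-- `𝓑` is (`𝐧`, almost greedy) with constant `C`:
`‖x - G_m(x)‖ ≤ C σ̃^𝐧_m(x)` where `σ̃^𝐧_m(x) = inf {‖x - P_D(x)‖ : D ⊆ 𝐧, |D| = m}`. -/
def AlmostGreedyWith (seq : ℕ → ℕ) (C : ℝ) : Prop :=
  ∀ x : X, ∀ m : ℕ, 1 ≤ m → ∀ A : Finset ℕ, A.card = m → B.IsGreedySet x A →
    ∀ D : Finset ℕ, (↑D : Set ℕ) ⊆ Set.range seq → D.card = m →
      ‖x - B.proj A x‖ ≤ C * ‖x - B.proj D x‖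

/-- `𝓑` is (`𝐧`, almost greedy). -/
def AlmostGreedy (seq : ℕ → ℕ) : Prop := ∃ C : ℝ, 1 ≤ C ∧ B.AlmostGreedyWith seq C

/-- `𝓑` is 1-unconditional. -/
def OneUnconditional : Prop :=
  ∀ (F : Finset ℕ) (a b : ℕ → 𝕜), (∀ n, ‖a n‖ ≤ ‖b n‖) →
    ‖∑ n ∈ F, a n • B.e n‖ ≤ ‖∑ n ∈ F, b n • B.e n‖

/-- `𝓑` is `C`-(`𝐧`, consecutive almost greedy) of type I. -/
def CAGIWith (seq : ℕ → ℕ) (C : ℝ) : Prop :=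
  ∀ x : X, ∀ m : ℕ, 1 ≤ m → ∀ A : Finset ℕ, A.card = m → B.IsGreedySet x A →
    ∀ k : ℕ, ‖x - B.proj A x‖ ≤ C * ‖x - B.proj (intervalSet seq k m) x‖

/-- `𝓑` is `C`-(`𝐧`, consecutive almost greedy) of type II. -/
def CAGIIWith (seq : ℕ → ℕ) (C : ℝ) : Prop :=
  ∀ x : X, ∀ m : ℕ, 1 ≤ m → ∀ A : Finset ℕ, A.card = m → B.IsGreedySet x A →
    ∀ k p : ℕ, ((↑(intervalSet seq k p) : Set ℕ) ∩ B.supp x).ncard ≤ m →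
      ‖x - B.proj A x‖ ≤ C * ‖x - B.proj (intervalSet seq k p) x‖

/-- `𝓑` is `C`-(`𝐧`, RSLC). -/
def RSLCWith (seq : ℕ → ℕ) (C : ℝ) : Prop :=
  ∀ x : X, (∀ n, ‖B.coord n x‖ ≤ 1) → ∀ A D : Finset ℕ, SPair seq A D →
    (∀ d ∈ D, B.coord d x = 0) →
    (∀ j : ℕ, (j ∈ D ∨ B.coord j x ≠ 0) → j ∈ Set.range seq →
      (∀ a ∈ A, j < a) ∨ (∀ a ∈ A, a < j)) →
    ∀ ε δ : ℕ → 𝕜, (∀ n, ‖ε n‖ = 1) → (∀ n, ‖δ n‖ = 1) →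
      ‖x + B.sgnSum ε A‖ ≤ C * ‖x + B.sgnSum δ D‖

/-- `𝓑` is `C`-(`𝐧`, SLC). -/
def SLCWith (seq : ℕ → ℕ) (C : ℝ) : Prop :=
  ∀ x : X, (∀ n, ‖B.coord n x‖ ≤ 1) → ∀ A D : Finset ℕ, SPair seq A D →
    Disjoint A D → (∀ a ∈ A, B.coord a x = 0) → (∀ d ∈ D, B.coord d x = 0) →
    ∀ ε δ : ℕ → 𝕜, (∀ n, ‖ε n‖ = 1) → (∀ n, ‖δ n‖ = 1) →
      ‖x + B.sgnSum ε A‖ ≤ C * ‖x + B.sgnSum δ D‖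

/-- The Lebesgue-type parameter `L̂^𝐧_m`: the least constant `C ∈ [0,∞]` with
`‖x - G_m(x)‖ ≤ C σ̂^𝐧_m(x)` for all `x` and all greedy sums `G_m(x)`. -/
noncomputable def Lhat (seq : ℕ → ℕ) (m : ℕ) : ℝ≥0∞ :=
  sInf {C : ℝ≥0∞ | ∀ (x : X) (A : Finset ℕ), A.card = m → B.IsGreedySet x A →
    ∀ k : ℕ, k ≤ m →
      (‖x - B.proj A x‖₊ : ℝ≥0∞) ≤ C * (‖x - B.projSeq seq k x‖₊ : ℝ≥0∞)}

/-- The parameter `g_m^c`. -/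
noncomputable def gc (m : ℕ) : ℝ≥0∞ :=
  ⨆ (x : X) (_ : x ≠ 0) (A : Finset ℕ) (_ : A.card ≤ m) (_ : B.IsGreedySet x A),
    (‖x - B.proj A x‖₊ : ℝ≥0∞) / (‖x‖₊ : ℝ≥0∞)

/-- The parameter `g̃_m`. -/
noncomputable def gtilde (m : ℕ) : ℝ≥0∞ :=
  ⨆ (x : X) (_ : x ≠ 0) (A : Finset ℕ) (A' : Finset ℕ) (_ : A ⊆ A') (_ : A.card < A'.card)
    (_ : A'.card ≤ m) (_ : B.IsGreedySet x A) (_ : B.IsGreedySet x A'),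
    (‖B.proj A' x - B.proj A x‖₊ : ℝ≥0∞) / (‖x‖₊ : ℝ≥0∞)

/-- The parameter `sc^𝐧_m`. -/
noncomputable def scParam (seq : ℕ → ℕ) (m : ℕ) : ℝ≥0∞ :=
  ⨆ (A : Finset ℕ) (D : Finset ℕ) (_ : TPair seq A D) (_ : D.card ≤ m)
    (_ : ∀ a ∈ A, a ≤ seq (m - 1)) (ε : ℕ → 𝕜) (_ : ∀ n, ‖ε n‖ = 1)
    (δ : ℕ → 𝕜) (_ : ∀ n, ‖δ n‖ = 1),
    (‖B.sgnSum ε A‖₊ : ℝ≥0∞) / (‖B.sgnSum δ D‖₊ : ℝ≥0∞)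

/-- The parameter `ω^𝐧_m`. -/
noncomputable def omegaParam (seq : ℕ → ℕ) (m : ℕ) : ℝ≥0∞ :=
  ⨆ (x : X) (_ : ∀ n, ‖B.coord n x‖ ≤ 1) (A : Finset ℕ) (D : Finset ℕ)
    (_ : (↑A : Set ℕ) ⊆ Set.range seq) (_ : A.card ≤ D.card) (_ : D.card ≤ m)
    (_ : ∀ a ∈ A, a ≤ seq (m - 1)) (_ : ∀ d ∈ D, B.coord d x = 0)
    (_ : ∀ a ∈ A, ∀ j : ℕ, (j ∈ D ∨ B.coord j x ≠ 0) → j ∈ Set.range seq → a < j)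
    (ε : ℕ → 𝕜) (_ : ∀ n, ‖ε n‖ = 1) (δ : ℕ → 𝕜) (_ : ∀ n, ‖δ n‖ = 1),
    (‖x + B.sgnSum ε A‖₊ : ℝ≥0∞) / (‖x + B.sgnSum δ D‖₊ : ℝ≥0∞)

/-- The parameter `ω̂^𝐧_m`. -/
noncomputable def omegaHatParam (seq : ℕ → ℕ) (m : ℕ) : ℝ≥0∞ :=
  ⨆ (x : X) (_ : ∀ n, ‖B.coord n x‖ ≤ 1) (A : Finset ℕ) (D : Finset ℕ)
    (_ : (↑A : Set ℕ) ⊆ Set.range seq) (_ : A.card ≤ D.card) (_ : D.card ≤ m)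
    (_ : ∀ a ∈ A, a ≤ seq (m - 1))
    (_ : ∀ d ∈ D, B.coord d (x - B.proj A x) = 0)
    (_ : ∀ a ∈ A, ∀ j : ℕ, (j ∈ D ∨ B.coord j (x - B.proj A x) ≠ 0) →
      j ∈ Set.range seq → a < j)
    (ε : ℕ → 𝕜) (_ : ∀ n, ‖ε n‖ = 1),
    (‖x‖₊ : ℝ≥0∞) / (‖x - B.proj A x + B.sgnSum ε D‖₊ : ℝ≥0∞)

/-- `κ = sup_{j,k} ‖e_j‖ ‖e_k^*‖`. -/
noncomputable def kappa : ℝ≥0∞ :=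
  ⨆ (j : ℕ) (k : ℕ), ((‖B.e j‖₊ * ‖B.coord k‖₊ : ℝ≥0) : ℝ≥0∞)

/-- `𝓑` is `𝐬`-(`𝐧`, strong partially greedy) with constant `C`:
the strong partially greedy inequality for all orders `m` in the sequence `s`. -/
def SPGOnWith (seq : ℕ → ℕ) (s : ℕ → ℕ) (C : ℝ) : Prop :=
  ∀ x : X, ∀ i : ℕ, ∀ A : Finset ℕ, A.card = s i → B.IsGreedySet x A →
    ∀ k : ℕ, k ≤ s i → ‖x - B.proj A x‖ ≤ C * ‖x - B.projSeq seq k x‖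

/-- `𝓑` is (`λ`, `𝐧`, strong partially greedy). -/
def LamSPG (seq : ℕ → ℕ) (lam : ℝ) : Prop :=
  ∃ C : ℝ, 1 ≤ C ∧ ∀ x : X, ∀ m : ℕ, 1 ≤ m →
    ∀ A : Finset ℕ, A.card = ⌈lam * (m : ℝ)⌉₊ → B.IsGreedySet x A →
      ∀ k : ℕ, k ≤ m → ‖x - B.proj A x‖ ≤ C * ‖x - B.projSeq seq k x‖

/-- `𝓑` is (`λ`, `𝐧`, PSLC). -/
def LamPSLC (seq : ℕ → ℕ) (lam : ℝ) : Prop :=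
  ∃ C : ℝ, 1 ≤ C ∧ ∀ x : X, (∀ n, ‖B.coord n x‖ ≤ 1) →
    ∀ A D : Finset ℕ, (↑A : Set ℕ) ⊆ Set.range seq → A.card ≤ D.card →
      (lam - 1) * (iotaMax seq A : ℝ) + A.card ≤ D.card →
      (∀ d ∈ D, B.coord d x = 0) →
      (∀ a ∈ A, ∀ j : ℕ, (j ∈ D ∨ B.coord j x ≠ 0) → j ∈ Set.range seq → a < j) →
      ∀ ε δ : ℕ → 𝕜, (∀ n, ‖ε n‖ = 1) → (∀ n, ‖δ n‖ = 1) →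
        ‖x + B.sgnSum ε A‖ ≤ C * ‖x + B.sgnSum δ D‖

/-- `𝓑` is (`λ`, `𝐧`, superconservative). -/
def LamSuperconservative (seq : ℕ → ℕ) (lam : ℝ) : Prop :=
  ∃ C : ℝ, 0 < C ∧ ∀ A D : Finset ℕ, TPair seq A D →
    (lam - 1) * (iotaMax seq A : ℝ) + A.card ≤ D.card →
    ∀ ε δ : ℕ → 𝕜, (∀ n, ‖ε n‖ = 1) → (∀ n, ‖δ n‖ = 1) →
      ‖B.sgnSum ε A‖ ≤ C * ‖B.sgnSum δ D‖

/-- `𝓑` is (`λ`, `𝐧`, conservative). -/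
def LamConservative (seq : ℕ → ℕ) (lam : ℝ) : Prop :=
  ∃ C : ℝ, 0 < C ∧ ∀ A D : Finset ℕ, TPair seq A D →
    (lam - 1) * (iotaMax seq A : ℝ) + A.card ≤ D.card →
    ‖B.ones A‖ ≤ C * ‖B.ones D‖

/-- `𝓑` is `ω`-(`𝐧`, strong partially greedy) for the weight on sets `w`. -/
def WSPG (seq : ℕ → ℕ) (w : Set ℕ → ℝ≥0∞) : Prop :=
  ∃ C : ℝ, 1 ≤ C ∧ ∀ x : X, ∀ m : ℕ, 1 ≤ m → ∀ A : Finset ℕ, A.card = m →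
    B.IsGreedySet x A → ∀ m' : ℕ,
      w (↑((Finset.range m').image seq \ A) : Set ℕ) ≤
        w (↑(A \ (Finset.range m').image seq) : Set ℕ) →
      ‖x - B.proj A x‖ ≤ C * ‖x - B.proj ((Finset.range m').image seq) x‖

/-- `𝓑` is `ω`-(`𝐧`, PSLC). -/
def WPSLC (seq : ℕ → ℕ) (w : Set ℕ → ℝ≥0∞) : Prop :=
  ∃ C : ℝ, 1 ≤ C ∧ ∀ x : X, (∀ n, ‖B.coord n x‖ ≤ 1) →
    ∀ A D : Finset ℕ, WTPair w seq A D →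
      (∀ d ∈ D, B.coord d x = 0) →
      (∀ a ∈ A, ∀ j : ℕ, (j ∈ D ∨ B.coord j x ≠ 0) → j ∈ Set.range seq → a < j) →
      ∀ ε δ : ℕ → 𝕜, (∀ n, ‖ε n‖ = 1) → (∀ n, ‖δ n‖ = 1) →
        ‖x + B.sgnSum ε A‖ ≤ C * ‖x + B.sgnSum δ D‖

/-- `𝓑` is `ω`-(`𝐧`, superconservative). -/
def WSuperconservative (seq : ℕ → ℕ) (w : Set ℕ → ℝ≥0∞) : Prop :=
  ∃ C : ℝ, 0 < C ∧ ∀ A D : Finset ℕ, WTPair w seq A D →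
    ∀ ε δ : ℕ → 𝕜, (∀ n, ‖ε n‖ = 1) → (∀ n, ‖δ n‖ = 1) →
      ‖B.sgnSum ε A‖ ≤ C * ‖B.sgnSum δ D‖

/-- `𝓑` is `ω`-(`𝐧`, conservative). -/
def WConservative (seq : ℕ → ℕ) (w : Set ℕ → ℝ≥0∞) : Prop :=
  ∃ C : ℝ, 0 < C ∧ ∀ A D : Finset ℕ, WTPair w seq A D → ‖B.ones A‖ ≤ C * ‖B.ones D‖

end BasisOf

/-- A Banach space over `𝕜` equipped with a basis. -/
structure BanachWithBasis (𝕜 : Type*) [RCLike 𝕜] where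
  carrier : Type
  [grp : NormedAddCommGroup carrier]
  [mod : NormedSpace 𝕜 carrier]
  [comp : CompleteSpace carrier]
  basis : BasisOf 𝕜 carrier

attribute [instance] BanachWithBasis.grp BanachWithBasis.mod BanachWithBasis.comp


set_option linter.unusedVariables false
set_option linter.unusedSectionVars false
set_option maxHeartbeats 1000000

noncomputable section
namespace Stmt11
section
variable {𝕜 : Type*} [RCLike 𝕜]



/-- Type-0 copy of `ℂ`, to carry an exotic `𝕜`-module structure. -/
def CK (𝕜 : Type*) : Type := ℂ

variable {𝕜 : Type*} [RCLike 𝕜]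

instance : NormedField (CK 𝕜) := inferInstanceAs (NormedField ℂ)
instance : CompleteSpace (CK 𝕜) := inferInstanceAs (CompleteSpace ℂ)

/-- The canonical ring embedding of `𝕜` into `ℂ`. -/
def phiC (𝕜 : Type*) [RCLike 𝕜] : 𝕜 →+* ℂ where
  toFun c := Complex.mk (RCLike.re c) (RCLike.im c)
  map_one' := by apply Complex.ext <;> simp
  map_mul' z w := by
    apply Complex.ext
    · simp [RCLike.mul_re, Complex.mul_re]
    · simp [RCLike.mul_im, Complex.mul_im]
  map_zero' := by apply Complex.ext <;> simp
  map_add' z w := by apply Complex.ext <;> simp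

/-- Same, viewed into `CK 𝕜`. -/
def phi (𝕜 : Type*) [RCLike 𝕜] : 𝕜 →+* CK 𝕜 := phiC 𝕜

lemma norm_phi (c : 𝕜) : ‖phi 𝕜 c‖ = ‖c‖ := by
  have h1 : ‖phi 𝕜 c‖ = Real.sqrt (RCLike.re c * RCLike.re c + RCLike.im c * RCLike.im c) := by
    show ‖(phiC 𝕜 c : ℂ)‖ = _
    rw [Complex.norm_def, Complex.normSq_apply]
    rfl
  have h2 : ‖c‖ ^ 2 = RCLike.re c * RCLike.re c + RCLike.im c * RCLike.im c :=
    RCLike.norm_sq_eq_def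
  rw [h1, ← h2, Real.sqrt_sq (norm_nonneg _)]

instance : Module 𝕜 (CK 𝕜) := Module.compHom (CK 𝕜) (phi 𝕜)

lemma smul_def (c : 𝕜) (z : CK 𝕜) : c • z = phi 𝕜 c * z := rfl

instance : NormedSpace 𝕜 (CK 𝕜) where
  norm_smul_le c z := by rw [smul_def, norm_mul, norm_phi]

lemma phi_injective : Function.Injective (phi 𝕜) := fun a b h => by
  have : RCLike.re a = RCLike.re b ∧ RCLike.im a = RCLike.im b := by
    constructor
    · exact congrArg Complex.re h
    · exact congrArg Complex.im h
  conv_lhs => rw [← RCLike.re_add_im a]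
  conv_rhs => rw [← RCLike.re_add_im b]
  rw [this.1, this.2]

/-- `𝕜`-linear retraction `CK 𝕜 → 𝕜`. -/
def psiL (𝕜 : Type*) [RCLike 𝕜] : CK 𝕜 →ₗ[𝕜] 𝕜 where
  toFun z := (Complex.re z : 𝕜) + (Complex.im z : 𝕜) * RCLike.I
  map_add' z w := by
    show ((Complex.re (z + w) : 𝕜)) + _ = _
    have : Complex.re (z+w) = Complex.re z + Complex.re w := rfl
    have h2 : Complex.im (z+w) = Complex.im z + Complex.im w := rfl
    rw [this, h2]; push_cast; ring
  map_smul' c z := by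
    show ((Complex.re (phi 𝕜 c * z) : 𝕜)) + ((Complex.im (phi 𝕜 c * z) : 𝕜)) * RCLike.I
      = c * (((Complex.re z : 𝕜)) + ((Complex.im z : 𝕜)) * RCLike.I)
    have hre : Complex.re (phi 𝕜 c * z)
        = RCLike.re c * Complex.re z - RCLike.im c * Complex.im z := rfl
    have him : Complex.im (phi 𝕜 c * z)
        = RCLike.re c * Complex.im z + RCLike.im c * Complex.re z := by
      show RCLike.re c * Complex.im z + RCLike.im c * Complex.re z = _
      ring
    rw [hre, him]
    conv_rhs => rw [← RCLike.re_add_im c]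
    rcases RCLike.I_mul_I_ax (K := 𝕜) with h | h
    · have him0 : ∀ d : 𝕜, RCLike.im d = 0 := by
        intro d
        have := RCLike.re_add_im d
        rw [h, mul_zero, add_zero] at this
        -- d = re d
        have : RCLike.im d = RCLike.im ((RCLike.re d : 𝕜)) := by rw [this]
        simpa using this
      rw [him0 c]
      push_cast
      ring
    · push_cast
      linear_combination (-((RCLike.im c : 𝕜)) * ((Complex.im z : 𝕜))) * h
  
lemma psiL_phi (c : 𝕜) : psiL 𝕜 (phi 𝕜 c) = c := by
  show ((RCLike.re c : 𝕜)) + ((RCLike.im c : 𝕜)) * RCLike.I = c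
  exact RCLike.re_add_im c

lemma norm_psiL_le (z : CK 𝕜) : ‖psiL 𝕜 z‖ ≤ 2 * ‖z‖ := by
  have h1 : ‖(Complex.re z : 𝕜)‖ ≤ ‖z‖ := by
    rw [RCLike.norm_ofReal]
    exact Complex.abs_re_le_norm z
  have h2 : ‖(Complex.im z : 𝕜) * RCLike.I‖ ≤ ‖z‖ := by
    rw [norm_mul, RCLike.norm_ofReal]
    calc |Complex.im z| * ‖(RCLike.I : 𝕜)‖ ≤ |Complex.im z| * 1 := by
          gcongr
          by_cases h : (RCLike.I : 𝕜) = 0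
          · rw [h]; simp
          · rw [RCLike.norm_I_of_ne_zero h]
        _ ≤ ‖z‖ := by rw [mul_one]; exact Complex.abs_im_le_norm z
  calc ‖psiL 𝕜 z‖ ≤ ‖(Complex.re z : 𝕜)‖ + ‖(Complex.im z : 𝕜) * RCLike.I‖ := norm_add_le _ _
    _ ≤ 2 * ‖z‖ := by linarith



instance : IsScalarTower 𝕜 (CK 𝕜) (CK 𝕜) :=
  ⟨fun c a z => by show (phi 𝕜 c * a) * z = phi 𝕜 c * (a * z); ring⟩
instance : SMulCommClass 𝕜 (CK 𝕜) (CK 𝕜) :=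
  ⟨fun c a z => by show phi 𝕜 c * (a * z) = a * (phi 𝕜 c * z); ring⟩

/-- real scalars inside `CK 𝕜`. -/
def ofR (𝕜 : Type*) (r : ℝ) : CK 𝕜 := Complex.ofReal r

lemma norm_ofR (r : ℝ) : ‖ofR 𝕜 r‖ = |r| := Complex.norm_real r

lemma ofR_add (r s : ℝ) : ofR 𝕜 (r + s) = ofR 𝕜 r + ofR 𝕜 s := by
  show ((((r + s : ℝ)) : ℂ)) = _
  push_cast
  rfl

lemma exists_phase (z : CK 𝕜) : ∃ u : CK 𝕜, ‖u‖ ≤ 1 ∧ u * z = ofR 𝕜 ‖z‖ := by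
  by_cases h : z = 0
  · exact ⟨0, by simp, by simp [h, ofR]; rfl⟩
  · refine ⟨ofR 𝕜 ‖z‖ / z, ?_, ?_⟩
    · rw [norm_div, norm_ofR, abs_of_nonneg (norm_nonneg _)]
      exact le_of_eq (div_self (by simpa using h))
    · field_simp

variable (mseq nseq : ℕ → ℕ)

def SSet : Set ℕ := Set.range nseq \ Set.range mseq

/-- weight -/
def g (x : ℕ) : ℕ := Nat.sqrt ((SSet mseq nseq ∩ Set.Iic x).ncard)

lemma SSet_inter_finite (x : ℕ) : (SSet mseq nseq ∩ Set.Iic x).Finite :=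
  (Set.finite_Iic x).subset Set.inter_subset_right

lemma g_mono : Monotone (g mseq nseq) := by
  intro a b hab
  apply Nat.sqrt_le_sqrt
  exact Set.ncard_le_ncard (Set.inter_subset_inter_right _ (Set.Iic_subset_Iic.2 hab))
    (SSet_inter_finite mseq nseq b)

/-- Window indices. -/
structure WIdx (𝕜 : Type*) [RCLike 𝕜] (mseq nseq : ℕ → ℕ) : Type where
  F : Finset ℕ
  G : Finset ℕ
  sg : ℕ → CK 𝕜
  hF : ∀ b ∈ F, b ∈ Set.range nseq
  hcard : ∀ a ∈ F, F.card ≤ g mseq nseq a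
  hG : ∀ b ∈ G, b ∉ Set.range nseq
  hsg : ∀ n, ‖sg n‖ ≤ 1

def Idx (𝕜 : Type*) [RCLike 𝕜] (mseq nseq : ℕ → ℕ) : Type := ℕ ⊕ WIdx 𝕜 mseq nseq

instance : TopologicalSpace (Idx 𝕜 mseq nseq) := ⊥
instance : DiscreteTopology (Idx 𝕜 mseq nseq) := ⟨rfl⟩

abbrev Amb (𝕜 : Type*) [RCLike 𝕜] (mseq nseq : ℕ → ℕ) : Type :=
  BoundedContinuousFunction (Idx 𝕜 mseq nseq) (CK 𝕜)

def Efun (n : ℕ) : Idx 𝕜 mseq nseq → CK 𝕜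
  | .inl m => if m = n then 1 else 0
  | .inr w => (if n ∈ w.F then w.sg n else 0) + (if n ∈ w.G then w.sg n else 0)

lemma norm_Efun_le (n : ℕ) (i : Idx 𝕜 mseq nseq) : ‖Efun mseq nseq n i‖ ≤ 1 := by
  cases i with
  | inl m => by_cases h : m = n <;> simp [Efun, h]
  | inr w =>
    by_cases h1 : n ∈ w.F
    · have h2 : n ∉ w.G := fun h2 => w.hG n h2 (w.hF n h1)
      simpa [Efun, h1, h2] using w.hsg n
    · by_cases h2 : n ∈ w.G
      · simpa [Efun, h1, h2] using w.hsg n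
      · simp [Efun, h1, h2]

def Evec (n : ℕ) : Amb 𝕜 mseq nseq :=
  .ofNormedAddCommGroup (Efun mseq nseq n) continuous_of_discreteTopology 1
    (norm_Efun_le mseq nseq n)

@[simp] lemma Evec_apply (n : ℕ) (i : Idx 𝕜 mseq nseq) :
    Evec mseq nseq n i = Efun mseq nseq n i := rfl

variable (𝕜) in
/-- The Banach space, as a closed subspace of `Amb`. -/
def Xc : Submodule 𝕜 (Amb 𝕜 mseq nseq) :=
  (Submodule.span 𝕜 (Set.range (Evec mseq nseq (𝕜 := 𝕜)))).topologicalClosure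

instance : CompleteSpace (Xc 𝕜 mseq nseq) :=
  (Submodule.isClosed_topologicalClosure _).completeSpace_coe

/-- `𝕜`-valued continuous retraction. -/
def psiCLM (𝕜 : Type*) [RCLike 𝕜] : CK 𝕜 →L[𝕜] 𝕜 :=
  LinearMap.mkContinuous (psiL 𝕜) 2 (fun z => norm_psiL_le z)

lemma psiCLM_phi (c : 𝕜) : psiCLM 𝕜 (phi 𝕜 c) = c := psiL_phi c

variable (𝕜) in
def ev (mseq nseq : ℕ → ℕ) (i : Idx 𝕜 mseq nseq) : Amb 𝕜 mseq nseq →L[𝕜] CK 𝕜 :=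
  BoundedContinuousFunction.evalCLM 𝕜 i

@[simp] lemma ev_apply (mseq nseq : ℕ → ℕ) (i : Idx 𝕜 mseq nseq) (y : Amb 𝕜 mseq nseq) :
    ev 𝕜 mseq nseq i y = y i := rfl

variable (mseq nseq : ℕ → ℕ)

variable (𝕜) in
def winCLM (w : WIdx 𝕜 mseq nseq) : Amb 𝕜 mseq nseq →L[𝕜] CK 𝕜 :=
  ev 𝕜 mseq nseq (Sum.inr w)
    - (∑ n ∈ w.F, (ContinuousLinearMap.mul 𝕜 (CK 𝕜) (w.sg n)).comp (ev 𝕜 mseq nseq (Sum.inl n))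
      + ∑ n ∈ w.G, (ContinuousLinearMap.mul 𝕜 (CK 𝕜) (w.sg n)).comp (ev 𝕜 mseq nseq (Sum.inl n)))

lemma winCLM_Evec (w : WIdx 𝕜 mseq nseq) (m : ℕ) :
    winCLM 𝕜 mseq nseq w (Evec mseq nseq m) = 0 := by
  have hFG : m ∈ w.F → m ∈ w.G → False := fun h1 h2 => w.hG m h2 (w.hF m h1)
  simp only [winCLM, ContinuousLinearMap.sub_apply, ContinuousLinearMap.add_apply,
    ContinuousLinearMap.coe_sum', Finset.sum_apply, ContinuousLinearMap.comp_apply,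
    ev_apply, Evec_apply]
  have e1 : ∀ n : ℕ, Efun mseq nseq m (Sum.inl n) = if n = m then (1 : CK 𝕜) else 0 := fun n => rfl
  have e2 : Efun mseq nseq m (Sum.inr w)
      = (if m ∈ w.F then w.sg m else 0) + (if m ∈ w.G then w.sg m else 0) := rfl
  show Efun mseq nseq m (Sum.inr w) - (∑ c ∈ w.F, ContinuousLinearMap.mul 𝕜 (CK 𝕜) (w.sg c)
      (Efun mseq nseq m (Sum.inl c)) + ∑ c ∈ w.G, ContinuousLinearMap.mul 𝕜 (CK 𝕜) (w.sg c)
      (Efun mseq nseq m (Sum.inl c))) = 0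
  rw [e2]
  have h3 : ∀ n ∈ w.F, ContinuousLinearMap.mul 𝕜 (CK 𝕜) (w.sg n) (Efun mseq nseq m (Sum.inl n))
      = if n = m then w.sg n else 0 := by
    intro n _
    rw [e1 n]
    by_cases h : n = m <;> simp [h]
  have h4 : ∀ n ∈ w.G, ContinuousLinearMap.mul 𝕜 (CK 𝕜) (w.sg n) (Efun mseq nseq m (Sum.inl n))
      = if n = m then w.sg n else 0 := by
    intro n _
    rw [e1 n]
    by_cases h : n = m <;> simp [h]
  rw [Finset.sum_congr rfl h3, Finset.sum_congr rfl h4, Finset.sum_ite_eq' w.F m w.sg,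
    Finset.sum_ite_eq' w.G m w.sg]
  abel

lemma Xc_le_ker_winCLM (w : WIdx 𝕜 mseq nseq) :
    Xc 𝕜 mseq nseq ≤ LinearMap.ker (winCLM 𝕜 mseq nseq w : Amb 𝕜 mseq nseq →ₗ[𝕜] CK 𝕜) := by
  apply Submodule.topologicalClosure_minimal
  · rw [Submodule.span_le]
    rintro _ ⟨m, rfl⟩
    exact LinearMap.mem_ker.2 (winCLM_Evec mseq nseq w m)
  · exact ContinuousLinearMap.isClosed_ker _

lemma window_eq {y : Amb 𝕜 mseq nseq} (hy : y ∈ Xc 𝕜 mseq nseq) (w : WIdx 𝕜 mseq nseq) :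
    y (Sum.inr w) = ∑ n ∈ w.F, w.sg n * y (Sum.inl n) + ∑ n ∈ w.G, w.sg n * y (Sum.inl n) := by
  have h := Xc_le_ker_winCLM mseq nseq w hy
  rw [LinearMap.mem_ker] at h
  have h2 : winCLM 𝕜 mseq nseq w y
      = y (Sum.inr w) - (∑ n ∈ w.F, w.sg n * y (Sum.inl n)
        + ∑ n ∈ w.G, w.sg n * y (Sum.inl n)) := by
    simp [winCLM, ContinuousLinearMap.sub_apply, ContinuousLinearMap.add_apply,
      ContinuousLinearMap.coe_sum', Finset.sum_apply, ContinuousLinearMap.comp_apply]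
    rfl
  rw [ContinuousLinearMap.coe_coe, h2] at h
  exact sub_eq_zero.1 h

variable (𝕜) in
def phiLM : 𝕜 →ₗ[𝕜] CK 𝕜 where
  toFun := phi 𝕜
  map_add' := map_add _
  map_smul' c d := by
    show phi 𝕜 (c * d) = c • phi 𝕜 d
    rw [map_mul, smul_def]

lemma isClosed_phiRange : IsClosed (Set.range (phi 𝕜) : Set (CK 𝕜)) :=
  ((AddMonoidHomClass.isometry_of_norm (phi 𝕜) norm_phi).isClosedEmbedding).isClosed_range

lemma coord_mem {y : Amb 𝕜 mseq nseq} (hy : y ∈ Xc 𝕜 mseq nseq) (n : ℕ) :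
    ∃ c : 𝕜, phi 𝕜 c = y (Sum.inl n) := by
  set Z : Submodule 𝕜 (Amb 𝕜 mseq nseq) :=
    Submodule.comap (ev 𝕜 mseq nseq (Sum.inl n) : Amb 𝕜 mseq nseq →ₗ[𝕜] CK 𝕜)
      (LinearMap.range (phiLM 𝕜)) with hZ
  have hcl : IsClosed (Z : Set (Amb 𝕜 mseq nseq)) := by
    have : (Z : Set (Amb 𝕜 mseq nseq))
        = (ev 𝕜 mseq nseq (Sum.inl n)) ⁻¹' (Set.range (phi 𝕜)) := by
      ext y'
      simp [hZ, Submodule.mem_comap, LinearMap.mem_range]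
      rfl
    rw [this]
    exact (isClosed_phiRange (𝕜 := 𝕜)).preimage (ev 𝕜 mseq nseq (Sum.inl n)).continuous
  have hle : Xc 𝕜 mseq nseq ≤ Z := by
    apply Submodule.topologicalClosure_minimal _ _ hcl
    rw [Submodule.span_le]
    rintro _ ⟨m, rfl⟩
    simp only [hZ, SetLike.mem_coe, Submodule.mem_comap, LinearMap.mem_range]
    by_cases h : n = m
    · refine ⟨1, ?_⟩
      show phi 𝕜 1 = Efun mseq nseq m (Sum.inl n)
      rw [map_one]
      simp [Efun, h]
    · refine ⟨0, ?_⟩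
      show phi 𝕜 0 = Efun mseq nseq m (Sum.inl n)
      rw [map_zero]
      simp [Efun, h]
  have := hle hy
  simp only [hZ, Submodule.mem_comap, LinearMap.mem_range] at this
  obtain ⟨c, hc⟩ := this
  exact ⟨c, hc⟩

lemma norm_le_of_bounds {y : Amb 𝕜 mseq nseq} (hy : y ∈ Xc 𝕜 mseq nseq) {M : ℝ} (hM : 0 ≤ M)
    (h1 : ∀ n, ‖y (Sum.inl n)‖ ≤ M)
    (h2 : ∀ w : WIdx 𝕜 mseq nseq,
      ∑ n ∈ w.F, ‖y (Sum.inl n)‖ + ∑ n ∈ w.G, ‖y (Sum.inl n)‖ ≤ M) :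
    ‖y‖ ≤ M := by
  rw [BoundedContinuousFunction.norm_le hM]
  intro i
  cases i with
  | inl n => exact h1 n
  | inr w =>
    rw [window_eq mseq nseq hy w]
    calc ‖∑ n ∈ w.F, w.sg n * y (Sum.inl n) + ∑ n ∈ w.G, w.sg n * y (Sum.inl n)‖
        ≤ ‖∑ n ∈ w.F, w.sg n * y (Sum.inl n)‖ + ‖∑ n ∈ w.G, w.sg n * y (Sum.inl n)‖ :=
          norm_add_le _ _
      _ ≤ ∑ n ∈ w.F, ‖w.sg n * y (Sum.inl n)‖ + ∑ n ∈ w.G, ‖w.sg n * y (Sum.inl n)‖ := by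
          gcongr <;> exact norm_sum_le _ _
      _ ≤ ∑ n ∈ w.F, ‖y (Sum.inl n)‖ + ∑ n ∈ w.G, ‖y (Sum.inl n)‖ := by
          refine add_le_add (Finset.sum_le_sum ?_) (Finset.sum_le_sum ?_) <;>
          · intro n hn
            rw [norm_mul]
            exact mul_le_of_le_one_left (norm_nonneg _) (w.hsg n)
      _ ≤ M := h2 w

lemma sum_norm_le_norm {y : Amb 𝕜 mseq nseq} (hy : y ∈ Xc 𝕜 mseq nseq) (F G : Finset ℕ)
    (hF : ∀ b ∈ F, b ∈ Set.range nseq) (hcard : ∀ a ∈ F, F.card ≤ g mseq nseq a)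
    (hG : ∀ b ∈ G, b ∉ Set.range nseq) :
    ∑ n ∈ F, ‖y (Sum.inl n)‖ + ∑ n ∈ G, ‖y (Sum.inl n)‖ ≤ ‖y‖ := by
  have hph : ∀ n : ℕ, ∃ u : CK 𝕜, ‖u‖ ≤ 1 ∧ u * y (Sum.inl n) = ofR 𝕜 ‖y (Sum.inl n)‖ :=
    fun n => exists_phase _
  choose u hu1 hu2 using hph
  set w : WIdx 𝕜 mseq nseq := ⟨F, G, u, hF, hcard, hG, hu1⟩ with hw
  have hval : y (Sum.inr w) = ofR 𝕜 (∑ n ∈ F, ‖y (Sum.inl n)‖ + ∑ n ∈ G, ‖y (Sum.inl n)‖) := by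
    rw [window_eq mseq nseq hy w]
    have hF' : ∑ n ∈ F, u n * y (Sum.inl n) = ofR 𝕜 (∑ n ∈ F, ‖y (Sum.inl n)‖) := by
      rw [Finset.sum_congr rfl (fun n _ => hu2 n)]
      show _ = ((((∑ n ∈ F, ‖y (Sum.inl n)‖ : ℝ)) : ℂ) : CK 𝕜)
      push_cast
      rfl
    have hG' : ∑ n ∈ G, u n * y (Sum.inl n) = ofR 𝕜 (∑ n ∈ G, ‖y (Sum.inl n)‖) := by
      rw [Finset.sum_congr rfl (fun n _ => hu2 n)]
      show _ = ((((∑ n ∈ G, ‖y (Sum.inl n)‖ : ℝ)) : ℂ) : CK 𝕜)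
      push_cast
      rfl
    show ∑ n ∈ F, u n * y (Sum.inl n) + ∑ n ∈ G, u n * y (Sum.inl n) = _
    rw [hF', hG', ofR_add]
  have h1 : ‖y (Sum.inr w)‖ ≤ ‖y‖ := BoundedContinuousFunction.norm_coe_le_norm y _
  rw [hval, norm_ofR] at h1
  calc ∑ n ∈ F, ‖y (Sum.inl n)‖ + ∑ n ∈ G, ‖y (Sum.inl n)‖
      ≤ |∑ n ∈ F, ‖y (Sum.inl n)‖ + ∑ n ∈ G, ‖y (Sum.inl n)‖| := le_abs_self _
    _ ≤ ‖y‖ := h1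


lemma Evec_mem_Xc (n : ℕ) : Evec mseq nseq (𝕜 := 𝕜) n ∈ Xc 𝕜 mseq nseq :=
  Submodule.le_topologicalClosure _ (Submodule.subset_span ⟨n, rfl⟩)

variable (𝕜) in
def basisE (n : ℕ) : Xc 𝕜 mseq nseq := ⟨Evec mseq nseq n, Evec_mem_Xc mseq nseq n⟩

variable (𝕜) in
def coordE (n : ℕ) : Xc 𝕜 mseq nseq →L[𝕜] 𝕜 :=
  (psiCLM 𝕜).comp ((ev 𝕜 mseq nseq (Sum.inl n)).comp (Xc 𝕜 mseq nseq).subtypeL)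

lemma coordE_apply (n : ℕ) (x : Xc 𝕜 mseq nseq) :
    coordE 𝕜 mseq nseq n x = psiCLM 𝕜 ((x : Amb 𝕜 mseq nseq) (Sum.inl n)) := rfl

lemma phi_coordE (n : ℕ) (x : Xc 𝕜 mseq nseq) :
    phi 𝕜 (coordE 𝕜 mseq nseq n x) = (x : Amb 𝕜 mseq nseq) (Sum.inl n) := by
  obtain ⟨c, hc⟩ := coord_mem mseq nseq x.2 n
  rw [coordE_apply, ← hc, psiCLM_phi]

lemma norm_coordE (n : ℕ) (x : Xc 𝕜 mseq nseq) :
    ‖coordE 𝕜 mseq nseq n x‖ = ‖(x : Amb 𝕜 mseq nseq) (Sum.inl n)‖ := by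
  rw [← phi_coordE mseq nseq n x, norm_phi]

lemma coordE_eq_zero_iff (n : ℕ) (x : Xc 𝕜 mseq nseq) :
    coordE 𝕜 mseq nseq n x = 0 ↔ (x : Amb 𝕜 mseq nseq) (Sum.inl n) = 0 := by
  constructor
  · intro h
    rw [← phi_coordE mseq nseq n x, h, map_zero]
  · intro h
    have := norm_coordE mseq nseq n x
    rw [h, norm_zero, norm_eq_zero] at this
    exact this

lemma norm_basisE (n : ℕ) : ‖basisE 𝕜 mseq nseq n‖ = 1 := by
  have : ‖basisE 𝕜 mseq nseq n‖ = ‖Evec mseq nseq (𝕜 := 𝕜) n‖ := rfl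
  rw [this]
  apply le_antisymm
  · rw [BoundedContinuousFunction.norm_le zero_le_one]
    exact norm_Efun_le mseq nseq n
  · have h := BoundedContinuousFunction.norm_coe_le_norm (Evec mseq nseq (𝕜 := 𝕜) n)
      (Sum.inl n)
    have h2 : ‖Evec mseq nseq (𝕜 := 𝕜) n (Sum.inl n)‖ = 1 := by
      show ‖Efun mseq nseq n (Sum.inl n)‖ = 1
      simp [Efun]
    rw [h2] at h
    exact h

lemma norm_coe_xc (x : Xc 𝕜 mseq nseq) : ‖x‖ = ‖(x : Amb 𝕜 mseq nseq)‖ := rfl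

lemma biorthE (j k : ℕ) :
    coordE 𝕜 mseq nseq j (basisE 𝕜 mseq nseq k) = if j = k then (1 : 𝕜) else 0 := by
  have hval : ((basisE 𝕜 mseq nseq k : Xc 𝕜 mseq nseq) : Amb 𝕜 mseq nseq) (Sum.inl j)
      = if j = k then (1 : CK 𝕜) else 0 := rfl
  rw [coordE_apply, hval]
  by_cases h : j = k
  · rw [if_pos h, if_pos h]
    have := psiCLM_phi (1 : 𝕜)
    rwa [map_one] at this
  · rw [if_neg h, if_neg h, map_zero]

variable (𝕜) in
def theBasis : BasisOf 𝕜 (Xc 𝕜 mseq nseq) where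
  e := basisE 𝕜 mseq nseq
  coord := coordE 𝕜 mseq nseq
  dense_span := by
    intro x
    rw [closure_subtype]
    have h1 : (Subtype.val '' (↑(Submodule.span 𝕜 (Set.range (basisE 𝕜 mseq nseq))) :
        Set (Xc 𝕜 mseq nseq)))
        = ↑(Submodule.span 𝕜 (Set.range (Evec mseq nseq (𝕜 := 𝕜)))) := by
      have h2 := Submodule.map_span ((Xc 𝕜 mseq nseq).subtype)
        (Set.range (basisE 𝕜 mseq nseq))
      have h3 : (Xc 𝕜 mseq nseq).subtype '' Set.range (basisE 𝕜 mseq nseq)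
          = Set.range (Evec mseq nseq (𝕜 := 𝕜)) := by
        rw [← Set.range_comp]
        rfl
      rw [h3] at h2
      calc Subtype.val '' (↑(Submodule.span 𝕜 (Set.range (basisE 𝕜 mseq nseq))) :
            Set (Xc 𝕜 mseq nseq))
          = ↑(Submodule.map (Xc 𝕜 mseq nseq).subtype
            (Submodule.span 𝕜 (Set.range (basisE 𝕜 mseq nseq)))) := by
            rw [Submodule.map_coe]; rfl
        _ = _ := by rw [h2]
    rw [h1, ← Submodule.topologicalClosure_coe]
    exact x.2
  biorth := biorthE mseq nseq
  norm_bounds := by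
    refine ⟨1, 1, one_pos, fun n => ⟨?_, ?_⟩, fun n => ⟨?_, ?_⟩⟩
    · exact (norm_basisE mseq nseq n).ge
    · -- 1 ≤ ‖coordE n‖
      have h1 : ‖coordE 𝕜 mseq nseq n (basisE 𝕜 mseq nseq n)‖ = 1 := by
        rw [biorthE mseq nseq n n, if_pos rfl, norm_one]
      have h2 := (coordE 𝕜 mseq nseq n).le_opNorm (basisE 𝕜 mseq nseq n)
      rw [h1, norm_basisE mseq nseq n, mul_one] at h2
      exact h2
    · exact (norm_basisE mseq nseq n).le
    · -- ‖coordE n‖ ≤ 1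
      refine ContinuousLinearMap.opNorm_le_bound _ zero_le_one (fun x => ?_)
      rw [norm_coordE mseq nseq n x, one_mul, norm_coe_xc]
      exact BoundedContinuousFunction.norm_coe_le_norm _ _


-- ### Bridging lemmas: coordinates of finite sums and basic vectors

lemma coe_sum_apply_inl (A : Finset ℕ) (c : ℕ → 𝕜) (m : ℕ) :
    ((∑ n ∈ A, c n • basisE 𝕜 mseq nseq n : Xc 𝕜 mseq nseq) : Amb 𝕜 mseq nseq) (Sum.inl m)
      = if m ∈ A then phi 𝕜 (c m) else 0 := by
  have h1 : ((∑ n ∈ A, c n • basisE 𝕜 mseq nseq n : Xc 𝕜 mseq nseq) : Amb 𝕜 mseq nseq)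
      = ∑ n ∈ A, c n • Evec mseq nseq n := by
    rw [AddSubmonoidClass.coe_finset_sum]
    exact Finset.sum_congr rfl (fun n _ => rfl)
  rw [h1]
  have h2 : (∑ n ∈ A, c n • Evec mseq nseq n : Amb 𝕜 mseq nseq) (Sum.inl m)
      = ∑ n ∈ A, (c n • Evec mseq nseq n : Amb 𝕜 mseq nseq) (Sum.inl m) := by
    rw [BoundedContinuousFunction.coe_sum]
    exact Finset.sum_apply _ _ _
  rw [h2]
  have h3 : ∀ n ∈ A, (c n • Evec mseq nseq n : Amb 𝕜 mseq nseq) (Sum.inl m)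
      = if n = m then phi 𝕜 (c n) else 0 := by
    intro n _
    rw [BoundedContinuousFunction.coe_smul]
    show c n • Efun mseq nseq n (Sum.inl m) = _
    have : Efun mseq nseq n (Sum.inl m) = if m = n then (1 : CK 𝕜) else 0 := rfl
    rw [this, smul_def]
    by_cases h : n = m
    · simp [h]
    · have h' : ¬ m = n := fun hh => h hh.symm
      simp [h, h']
  rw [Finset.sum_congr rfl h3, Finset.sum_ite_eq' A m (fun n => phi 𝕜 (c n))]

lemma sgnSum_coe_inl (ε : ℕ → 𝕜) (A : Finset ℕ) (m : ℕ) :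
    (((theBasis 𝕜 mseq nseq).sgnSum ε A : Xc 𝕜 mseq nseq) : Amb 𝕜 mseq nseq) (Sum.inl m)
      = if m ∈ A then phi 𝕜 (ε m) else 0 :=
  coe_sum_apply_inl mseq nseq A ε m

lemma ones_coe_inl (A : Finset ℕ) (m : ℕ) :
    (((theBasis 𝕜 mseq nseq).ones A : Xc 𝕜 mseq nseq) : Amb 𝕜 mseq nseq) (Sum.inl m)
      = if m ∈ A then 1 else 0 := by
  have h0 : (theBasis 𝕜 mseq nseq).ones A = ∑ n ∈ A, (1 : 𝕜) • basisE 𝕜 mseq nseq n := by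
    unfold BasisOf.ones
    simp [theBasis]
  rw [h0, coe_sum_apply_inl mseq nseq A (fun _ => (1:𝕜)) m, map_one]

-- ### The four properties

lemma theBasis_unconditional : (theBasis 𝕜 mseq nseq).OneUnconditional := by
  intro T a b hab
  set u : Xc 𝕜 mseq nseq := ∑ n ∈ T, a n • (theBasis 𝕜 mseq nseq).e n with hu
  set v : Xc 𝕜 mseq nseq := ∑ n ∈ T, b n • (theBasis 𝕜 mseq nseq).e n with hv
  have hue : ∀ m, ‖(u : Amb 𝕜 mseq nseq) (Sum.inl m)‖ ≤ ‖(v : Amb 𝕜 mseq nseq) (Sum.inl m)‖ := by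
    intro m
    have h1 := coe_sum_apply_inl mseq nseq T a m
    have h2 := coe_sum_apply_inl mseq nseq T b m
    rw [hu, hv]
    show ‖((∑ n ∈ T, a n • basisE 𝕜 mseq nseq n : Xc 𝕜 mseq nseq) : Amb 𝕜 mseq nseq) (Sum.inl m)‖
      ≤ ‖((∑ n ∈ T, b n • basisE 𝕜 mseq nseq n : Xc 𝕜 mseq nseq) : Amb 𝕜 mseq nseq) (Sum.inl m)‖
    rw [h1, h2]
    by_cases h : m ∈ T
    · rw [if_pos h, if_pos h, norm_phi, norm_phi]; exact hab m
    · rw [if_neg h, if_neg h]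
  show ‖u‖ ≤ ‖v‖
  rw [norm_coe_xc, norm_coe_xc]
  apply norm_le_of_bounds mseq nseq u.2 (norm_nonneg _)
  · intro m
    exact le_trans (hue m) (BoundedContinuousFunction.norm_coe_le_norm _ _)
  · intro w
    calc ∑ n ∈ w.F, ‖(u : Amb 𝕜 mseq nseq) (Sum.inl n)‖
          + ∑ n ∈ w.G, ‖(u : Amb 𝕜 mseq nseq) (Sum.inl n)‖
        ≤ ∑ n ∈ w.F, ‖(v : Amb 𝕜 mseq nseq) (Sum.inl n)‖
          + ∑ n ∈ w.G, ‖(v : Amb 𝕜 mseq nseq) (Sum.inl n)‖ := by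
          exact add_le_add (Finset.sum_le_sum fun n _ => hue n)
            (Finset.sum_le_sum fun n _ => hue n)
      _ ≤ ‖(v : Amb 𝕜 mseq nseq)‖ :=
          sum_norm_le_norm mseq nseq v.2 w.F w.G w.hF w.hcard w.hG


-- ### norm estimates for indicator sums

lemma ones_mem (A : Finset ℕ) :
    (((theBasis 𝕜 mseq nseq).ones A : Xc 𝕜 mseq nseq) : Amb 𝕜 mseq nseq) ∈ Xc 𝕜 mseq nseq :=
  ((theBasis 𝕜 mseq nseq).ones A).2

lemma norm_ones_ge_of_offN (A : Finset ℕ) (hA : ∀ a ∈ A, a ∉ Set.range nseq) :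
    (A.card : ℝ) ≤ ‖(theBasis 𝕜 mseq nseq).ones A‖ := by
  have h := sum_norm_le_norm (𝕜 := 𝕜) mseq nseq (ones_mem mseq nseq A) ∅ A
    (fun b hb => absurd hb (Finset.notMem_empty b))
    (fun a ha => absurd ha (Finset.notMem_empty a)) hA
  rw [Finset.sum_empty, zero_add] at h
  have h2 : ∑ n ∈ A, ‖(((theBasis 𝕜 mseq nseq).ones A : Xc 𝕜 mseq nseq) :
      Amb 𝕜 mseq nseq) (Sum.inl n)‖ = (A.card : ℝ) := by
    have hterm : ∀ n ∈ A, ‖(((theBasis 𝕜 mseq nseq).ones A : Xc 𝕜 mseq nseq) :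
        Amb 𝕜 mseq nseq) (Sum.inl n)‖ = (1 : ℝ) := fun n hn => by
      rw [ones_coe_inl mseq nseq A n, if_pos hn, norm_one]
    rw [Finset.sum_congr rfl hterm, Finset.sum_const, nsmul_eq_mul, mul_one]
  rw [h2] at h
  exact le_trans h (le_of_eq (norm_coe_xc mseq nseq _).symm)

lemma norm_ones_ge_of_allowed (A : Finset ℕ) (hA : ∀ a ∈ A, a ∈ Set.range nseq)
    (hg : ∀ a ∈ A, A.card ≤ g mseq nseq a) :
    (A.card : ℝ) ≤ ‖(theBasis 𝕜 mseq nseq).ones A‖ := by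
  have h := sum_norm_le_norm (𝕜 := 𝕜) mseq nseq (ones_mem mseq nseq A) A ∅ hA hg
    (fun a ha => absurd ha (Finset.notMem_empty a))
  rw [Finset.sum_empty, add_zero] at h
  have h2 : ∑ n ∈ A, ‖(((theBasis 𝕜 mseq nseq).ones A : Xc 𝕜 mseq nseq) :
      Amb 𝕜 mseq nseq) (Sum.inl n)‖ = (A.card : ℝ) := by
    have hterm : ∀ n ∈ A, ‖(((theBasis 𝕜 mseq nseq).ones A : Xc 𝕜 mseq nseq) :
        Amb 𝕜 mseq nseq) (Sum.inl n)‖ = (1 : ℝ) := fun n hn => by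
      rw [ones_coe_inl mseq nseq A n, if_pos hn, norm_one]
    rw [Finset.sum_congr rfl hterm, Finset.sum_const, nsmul_eq_mul, mul_one]
  rw [h2] at h
  exact le_trans h (le_of_eq (norm_coe_xc mseq nseq _).symm)

lemma norm_ones_le (D : Finset ℕ) (hD : ∀ d ∈ D, d ∈ Set.range nseq) (c : ℕ)
    (hg : ∀ d ∈ D, g mseq nseq d ≤ c) :
    ‖(theBasis 𝕜 mseq nseq).ones D‖ ≤ max 1 (c : ℝ) := by
  rw [norm_coe_xc]
  apply norm_le_of_bounds mseq nseq (ones_mem mseq nseq D)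
    (le_trans zero_le_one (le_max_left _ _))
  · intro m
    rw [ones_coe_inl mseq nseq D m]
    by_cases h : m ∈ D
    · rw [if_pos h, norm_one]; exact le_max_left _ _
    · rw [if_neg h, norm_zero]; exact le_trans zero_le_one (le_max_left _ _)
  · intro w
    have hG0 : ∑ n ∈ w.G, ‖(((theBasis 𝕜 mseq nseq).ones D : Xc 𝕜 mseq nseq) :
        Amb 𝕜 mseq nseq) (Sum.inl n)‖ = 0 := by
      apply Finset.sum_eq_zero
      intro n hn
      rw [ones_coe_inl mseq nseq D n, if_neg (fun hmem => w.hG n hn (hD n hmem)), norm_zero]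
    have hF : ∑ n ∈ w.F, ‖(((theBasis 𝕜 mseq nseq).ones D : Xc 𝕜 mseq nseq) :
        Amb 𝕜 mseq nseq) (Sum.inl n)‖ = ((w.F ∩ D).card : ℝ) := by
      have hterm : ∀ n ∈ w.F, ‖(((theBasis 𝕜 mseq nseq).ones D : Xc 𝕜 mseq nseq) :
          Amb 𝕜 mseq nseq) (Sum.inl n)‖ = if n ∈ D then (1:ℝ) else 0 := fun n hn => by
        rw [ones_coe_inl mseq nseq D n]
        by_cases h : n ∈ D
        · rw [if_pos h, if_pos h, norm_one]
        · rw [if_neg h, if_neg h, norm_zero]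
      rw [Finset.sum_congr rfl hterm, Finset.sum_ite_mem, Finset.sum_const, nsmul_eq_mul, mul_one]
    rw [hG0, hF, add_zero]
    by_cases hne : (w.F ∩ D).Nonempty
    · obtain ⟨d0, hd0⟩ := hne
      have h1 : (w.F ∩ D).card ≤ w.F.card := Finset.card_le_card Finset.inter_subset_left
      have h2 : w.F.card ≤ g mseq nseq d0 := w.hcard d0 (Finset.mem_of_mem_inter_left hd0)
      have h3 : g mseq nseq d0 ≤ c := hg d0 (Finset.mem_of_mem_inter_right hd0)
      have h4 : ((w.F ∩ D).card : ℝ) ≤ (c : ℝ) := by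
        exact_mod_cast le_trans h1 (le_trans h2 h3)
      exact le_trans h4 (le_max_right _ _)
    · rw [Finset.not_nonempty_iff_eq_empty] at hne
      rw [hne]
      simpa using le_trans zero_le_one (le_max_left (1:ℝ) (c:ℝ))


-- ### helper: pointwise window bound

lemma window_norm_le {y : Amb 𝕜 mseq nseq} (hy : y ∈ Xc 𝕜 mseq nseq) (w : WIdx 𝕜 mseq nseq) :
    ‖y (Sum.inr w)‖ ≤ ∑ n ∈ w.F, ‖y (Sum.inl n)‖ + ∑ n ∈ w.G, ‖y (Sum.inl n)‖ := by
  rw [window_eq mseq nseq hy w]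
  calc ‖∑ n ∈ w.F, w.sg n * y (Sum.inl n) + ∑ n ∈ w.G, w.sg n * y (Sum.inl n)‖
      ≤ ‖∑ n ∈ w.F, w.sg n * y (Sum.inl n)‖ + ‖∑ n ∈ w.G, w.sg n * y (Sum.inl n)‖ :=
        norm_add_le _ _
    _ ≤ ∑ n ∈ w.F, ‖w.sg n * y (Sum.inl n)‖ + ∑ n ∈ w.G, ‖w.sg n * y (Sum.inl n)‖ := by
        gcongr <;> exact norm_sum_le _ _
    _ ≤ ∑ n ∈ w.F, ‖y (Sum.inl n)‖ + ∑ n ∈ w.G, ‖y (Sum.inl n)‖ := by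
        refine add_le_add (Finset.sum_le_sum ?_) (Finset.sum_le_sum ?_) <;>
        · intro n hn
          rw [norm_mul]
          exact mul_le_of_le_one_left (norm_nonneg _) (w.hsg n)

-- ### the PSLC property with constant 1

lemma theBasis_pslc : (theBasis 𝕜 mseq nseq).PSLCWith nseq 1 := by
  classical
  intro x hx A D hTP hD0 horder ε δ hε hδ
  rw [one_mul]
  set u : Xc 𝕜 mseq nseq := x + (theBasis 𝕜 mseq nseq).sgnSum ε A with hu
  set v : Xc 𝕜 mseq nseq := x + (theBasis 𝕜 mseq nseq).sgnSum δ D with hv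
  -- coordinates of x vanish on A and D
  have hAN : ∀ a ∈ A, a ∈ Set.range nseq := fun a ha => hTP.1 (Finset.mem_coe.2 ha)
  have hxA : ∀ a ∈ A, (x : Amb 𝕜 mseq nseq) (Sum.inl a) = 0 := by
    intro a ha
    rw [← coordE_eq_zero_iff]
    by_contra hne
    exact lt_irrefl a (horder a ha a (Or.inr hne) (hAN a ha))
  have hxD : ∀ d ∈ D, (x : Amb 𝕜 mseq nseq) (Sum.inl d) = 0 := by
    intro d hd
    rw [← coordE_eq_zero_iff]
    exact hD0 d hd
  have hnormx : ∀ m, ‖(x : Amb 𝕜 mseq nseq) (Sum.inl m)‖ ≤ 1 := by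
    intro m
    rw [← norm_coordE]
    exact hx m
  -- coordinates of u and v
  have hcu : ∀ m, (u : Amb 𝕜 mseq nseq) (Sum.inl m)
      = (x : Amb 𝕜 mseq nseq) (Sum.inl m) + (if m ∈ A then phi 𝕜 (ε m) else 0) := by
    intro m
    rw [hu]
    have : ((x + (theBasis 𝕜 mseq nseq).sgnSum ε A : Xc 𝕜 mseq nseq) : Amb 𝕜 mseq nseq)
        = (x : Amb 𝕜 mseq nseq) + ((theBasis 𝕜 mseq nseq).sgnSum ε A : Amb 𝕜 mseq nseq) := rfl
    rw [this]
    exact congrArg₂ (· + ·) rfl (sgnSum_coe_inl mseq nseq ε A m)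
  have hcv : ∀ m, (v : Amb 𝕜 mseq nseq) (Sum.inl m)
      = (x : Amb 𝕜 mseq nseq) (Sum.inl m) + (if m ∈ D then phi 𝕜 (δ m) else 0) := by
    intro m
    rw [hv]
    have : ((x + (theBasis 𝕜 mseq nseq).sgnSum δ D : Xc 𝕜 mseq nseq) : Amb 𝕜 mseq nseq)
        = (x : Amb 𝕜 mseq nseq) + ((theBasis 𝕜 mseq nseq).sgnSum δ D : Amb 𝕜 mseq nseq) := rfl
    rw [this]
    exact congrArg₂ (· + ·) rfl (sgnSum_coe_inl mseq nseq δ D m)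
  have hcuA : ∀ m ∈ A, (u : Amb 𝕜 mseq nseq) (Sum.inl m) = phi 𝕜 (ε m) := by
    intro m hm
    rw [hcu m, hxA m hm, if_pos hm, zero_add]
  have hcuN : ∀ m, m ∉ A → (u : Amb 𝕜 mseq nseq) (Sum.inl m)
      = (x : Amb 𝕜 mseq nseq) (Sum.inl m) := by
    intro m hm
    rw [hcu m, if_neg hm, add_zero]
  have hcvD : ∀ m ∈ D, (v : Amb 𝕜 mseq nseq) (Sum.inl m) = phi 𝕜 (δ m) := by
    intro m hm
    rw [hcv m, hxD m hm, if_pos hm, zero_add]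
  have hcvN : ∀ m, m ∉ D → (v : Amb 𝕜 mseq nseq) (Sum.inl m)
      = (x : Amb 𝕜 mseq nseq) (Sum.inl m) := by
    intro m hm
    rw [hcv m, if_neg hm, add_zero]
  have hcvD1 : ∀ m ∈ D, ‖(v : Amb 𝕜 mseq nseq) (Sum.inl m)‖ = 1 := by
    intro m hm
    rw [hcvD m hm, norm_phi, hδ m]
  -- pointwise: ‖x_n‖ ≤ ‖v_n‖
  have hxv : ∀ m, ‖(x : Amb 𝕜 mseq nseq) (Sum.inl m)‖ ≤ ‖(v : Amb 𝕜 mseq nseq) (Sum.inl m)‖ := by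
    intro m
    by_cases hm : m ∈ D
    · rw [hxD m hm, norm_zero]
      exact norm_nonneg _
    · rw [hcvN m hm]
  -- main pointwise claim
  have claim3 : ∀ D₀ : Finset ℕ, D₀ ⊆ D → ∀ m, m ∉ A →
      ‖(u : Amb 𝕜 mseq nseq) (Sum.inl m)‖ + (if m ∈ D₀ then (1:ℝ) else 0)
        ≤ ‖(v : Amb 𝕜 mseq nseq) (Sum.inl m)‖ := by
    intro D₀ hD₀ m hm
    rw [hcuN m hm]
    by_cases hmD : m ∈ D₀
    · rw [if_pos hmD, hxD m (hD₀ hmD), norm_zero, zero_add, hcvD1 m (hD₀ hmD)]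
    · rw [if_neg hmD, add_zero]
      exact hxv m
  show ‖u‖ ≤ ‖v‖
  rw [norm_coe_xc, norm_coe_xc]
  rw [BoundedContinuousFunction.norm_le (norm_nonneg _)]
  intro i
  cases i with
  | inl m =>
    by_cases hm : m ∈ A
    · rw [hcuA m hm, norm_phi, hε m]
      have hDne : D.Nonempty := by
        rw [← Finset.card_pos]
        exact lt_of_lt_of_le (Finset.card_pos.2 ⟨m, hm⟩) hTP.2.1
      obtain ⟨d, hd⟩ := hDne
      calc (1:ℝ) = ‖(v : Amb 𝕜 mseq nseq) (Sum.inl d)‖ := (hcvD1 d hd).symm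
        _ ≤ ‖(v : Amb 𝕜 mseq nseq)‖ := BoundedContinuousFunction.norm_coe_le_norm _ _
    · rw [hcuN m hm]
      exact le_trans (hxv m) (BoundedContinuousFunction.norm_coe_le_norm _ _)
  | inr w =>
    -- choose D₀
    have hsub : (w.F ∩ A).card ≤ D.card :=
      le_trans (Finset.card_le_card Finset.inter_subset_right) hTP.2.1
    obtain ⟨D₀, hD₀sub, hD₀card⟩ := Finset.exists_subset_card_eq hsub
    set D₀N : Finset ℕ := D₀.filter (fun d => d ∈ Set.range nseq) with hD₀N
    set D₀G : Finset ℕ := D₀.filter (fun d => d ∉ Set.range nseq) with hD₀G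
    set F' : Finset ℕ := (w.F \ A) ∪ D₀N with hF'def
    set G' : Finset ℕ := w.G ∪ D₀G with hG'def
    -- window conditions for (F', G')
    have hF'sub : ∀ b ∈ F', b ∈ Set.range nseq := by
      intro b hb
      rcases Finset.mem_union.1 hb with h | h
      · exact w.hF b (Finset.mem_sdiff.1 h).1
      · exact (Finset.mem_filter.1 h).2
    have hG'sub : ∀ b ∈ G', b ∉ Set.range nseq := by
      intro b hb
      rcases Finset.mem_union.1 hb with h | h
      · exact w.hG b h
      · exact (Finset.mem_filter.1 h).2
    have hF'card_le : F'.card ≤ w.F.card := by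
      calc F'.card ≤ (w.F \ A).card + D₀N.card := Finset.card_union_le _ _
        _ ≤ (w.F \ A).card + D₀.card := by
            have hlecard : D₀N.card ≤ D₀.card := by
              rw [hD₀N]
              exact Finset.card_filter_le _ _
            omega
        _ = (w.F \ A).card + (w.F ∩ A).card := by rw [hD₀card]
        _ = w.F.card := by rw [add_comm, Finset.card_inter_add_card_sdiff]
    have hgF' : ∀ a ∈ F', F'.card ≤ g mseq nseq a := by
      intro a ha
      rcases Finset.mem_union.1 ha with h | h
      · exact le_trans hF'card_le (w.hcard a (Finset.mem_sdiff.1 h).1)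
      · have haD : a ∈ D := hD₀sub (Finset.mem_filter.1 h).1
        have haN : a ∈ Set.range nseq := (Finset.mem_filter.1 h).2
        have hFA : (w.F ∩ A).Nonempty := by
          rw [← Finset.card_pos, ← hD₀card]
          exact Finset.card_pos.2 ⟨a, (Finset.mem_filter.1 h).1⟩
        obtain ⟨a₀, ha₀⟩ := hFA
        have ha₀F : a₀ ∈ w.F := Finset.mem_of_mem_inter_left ha₀
        have ha₀A : a₀ ∈ A := Finset.mem_of_mem_inter_right ha₀
        have hlt : a₀ < a := hTP.2.2 a₀ ha₀A a haD haN
        exact le_trans hF'card_le (le_trans (w.hcard a₀ ha₀F) (g_mono mseq nseq hlt.le))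
    -- the norm of v dominates the (F', G') sum
    have hvsum : ∑ n ∈ F', ‖(v : Amb 𝕜 mseq nseq) (Sum.inl n)‖
        + ∑ n ∈ G', ‖(v : Amb 𝕜 mseq nseq) (Sum.inl n)‖ ≤ ‖(v : Amb 𝕜 mseq nseq)‖ :=
      sum_norm_le_norm mseq nseq v.2 F' G' hF'sub hgF' hG'sub
    -- bound ‖u (inr w)‖ by the (w.F, w.G) sum
    have hwin := window_norm_le mseq nseq u.2 w
    refine le_trans hwin (le_trans ?_ hvsum)
    -- now a purely combinatorial estimate
    -- (1) split the F-sum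
    have hsplitF : ∑ n ∈ w.F, ‖(u : Amb 𝕜 mseq nseq) (Sum.inl n)‖
        = ∑ n ∈ w.F ∩ A, ‖(u : Amb 𝕜 mseq nseq) (Sum.inl n)‖
          + ∑ n ∈ w.F \ A, ‖(u : Amb 𝕜 mseq nseq) (Sum.inl n)‖ :=
      (Finset.sum_inter_add_sum_sdiff _ _ _).symm
    -- (2) the F∩A part
    have hFA1 : ∑ n ∈ w.F ∩ A, ‖(u : Amb 𝕜 mseq nseq) (Sum.inl n)‖ = ((w.F ∩ A).card : ℝ) := by
      have hterm : ∀ n ∈ w.F ∩ A, ‖(u : Amb 𝕜 mseq nseq) (Sum.inl n)‖ = (1:ℝ) := by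
        intro n hn
        rw [hcuA n (Finset.mem_of_mem_inter_right hn), norm_phi, hε n]
      rw [Finset.sum_congr rfl hterm, Finset.sum_const, nsmul_eq_mul, mul_one]
    -- (4) sum of claim3 over w.F \ A
    have h4 : ∑ n ∈ w.F \ A, ‖(u : Amb 𝕜 mseq nseq) (Sum.inl n)‖
        + (((w.F \ A) ∩ D₀).card : ℝ)
        ≤ ∑ n ∈ w.F \ A, ‖(v : Amb 𝕜 mseq nseq) (Sum.inl n)‖ := by
      have := Finset.sum_le_sum (s := w.F \ A)
        (f := fun n => ‖(u : Amb 𝕜 mseq nseq) (Sum.inl n)‖ + (if n ∈ D₀ then (1:ℝ) else 0))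
        (g := fun n => ‖(v : Amb 𝕜 mseq nseq) (Sum.inl n)‖)
        (fun n hn => claim3 D₀ hD₀sub n (Finset.mem_sdiff.1 hn).2)
      rw [Finset.sum_add_distrib, Finset.sum_ite_mem, Finset.sum_const, nsmul_eq_mul,
        mul_one] at this
      exact this
    -- (5) over w.G
    have hGA : ∀ n ∈ w.G, n ∉ A := fun n hn hA => w.hG n hn (hAN n hA)
    have h5 : ∑ n ∈ w.G, ‖(u : Amb 𝕜 mseq nseq) (Sum.inl n)‖ + ((w.G ∩ D₀).card : ℝ)
        ≤ ∑ n ∈ w.G, ‖(v : Amb 𝕜 mseq nseq) (Sum.inl n)‖ := by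
      have := Finset.sum_le_sum (s := w.G)
        (f := fun n => ‖(u : Amb 𝕜 mseq nseq) (Sum.inl n)‖ + (if n ∈ D₀ then (1:ℝ) else 0))
        (g := fun n => ‖(v : Amb 𝕜 mseq nseq) (Sum.inl n)‖)
        (fun n hn => claim3 D₀ hD₀sub n (hGA n hn))
      rw [Finset.sum_add_distrib, Finset.sum_ite_mem, Finset.sum_const, nsmul_eq_mul,
        mul_one] at this
      exact this
    -- (6) split the F'-sum
    have h6 : ∑ n ∈ F', ‖(v : Amb 𝕜 mseq nseq) (Sum.inl n)‖
        = ∑ n ∈ w.F \ A, ‖(v : Amb 𝕜 mseq nseq) (Sum.inl n)‖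
          + ∑ n ∈ D₀N \ (w.F \ A), ‖(v : Amb 𝕜 mseq nseq) (Sum.inl n)‖ := by
      rw [hF'def, ← Finset.union_sdiff_self_eq_union,
        Finset.sum_union Finset.sdiff_disjoint.symm]
    have h7 : ∑ n ∈ D₀N \ (w.F \ A), ‖(v : Amb 𝕜 mseq nseq) (Sum.inl n)‖
        = ((D₀N \ (w.F \ A)).card : ℝ) := by
      have hterm : ∀ n ∈ D₀N \ (w.F \ A), ‖(v : Amb 𝕜 mseq nseq) (Sum.inl n)‖ = (1:ℝ) := by
        intro n hn
        exact hcvD1 n (hD₀sub (Finset.mem_filter.1 (Finset.mem_sdiff.1 hn).1).1)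
      rw [Finset.sum_congr rfl hterm, Finset.sum_const, nsmul_eq_mul, mul_one]
    have h8 : ∑ n ∈ G', ‖(v : Amb 𝕜 mseq nseq) (Sum.inl n)‖
        = ∑ n ∈ w.G, ‖(v : Amb 𝕜 mseq nseq) (Sum.inl n)‖
          + ((D₀G \ w.G).card : ℝ) := by
      rw [hG'def, ← Finset.union_sdiff_self_eq_union,
        Finset.sum_union Finset.sdiff_disjoint.symm]
      congr 1
      have hterm : ∀ n ∈ D₀G \ w.G, ‖(v : Amb 𝕜 mseq nseq) (Sum.inl n)‖ = (1:ℝ) := by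
        intro n hn
        exact hcvD1 n (hD₀sub (Finset.mem_filter.1 (Finset.mem_sdiff.1 hn).1).1)
      rw [Finset.sum_congr rfl hterm, Finset.sum_const, nsmul_eq_mul, mul_one]
    -- (9) counting
    have h9 : (w.F ∩ A).card ≤ ((w.F \ A) ∩ D₀).card + (w.G ∩ D₀).card
        + (D₀N \ (w.F \ A)).card + (D₀G \ w.G).card := by
      have hpart : D₀N.card + D₀G.card = D₀.card := by
        rw [hD₀N, hD₀G]
        exact Finset.card_filter_add_card_filter_not _
      have e1 : D₀N.card ≤ ((w.F \ A) ∩ D₀).card + (D₀N \ (w.F \ A)).card := by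
        have := Finset.card_inter_add_card_sdiff D₀N (w.F \ A)
        have hsub1 : D₀N ∩ (w.F \ A) ⊆ (w.F \ A) ∩ D₀ := by
          intro t ht
          rw [Finset.mem_inter] at ht ⊢
          exact ⟨ht.2, Finset.mem_of_mem_filter t ht.1⟩
        have := Finset.card_le_card hsub1
        omega
      have e2 : D₀G.card ≤ (w.G ∩ D₀).card + (D₀G \ w.G).card := by
        have := Finset.card_inter_add_card_sdiff D₀G w.G
        have hsub2 : D₀G ∩ w.G ⊆ w.G ∩ D₀ := by
          intro t ht
          rw [Finset.mem_inter] at ht ⊢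
          exact ⟨ht.2, Finset.mem_of_mem_filter t ht.1⟩
        have := Finset.card_le_card hsub2
        omega
      omega
    have h9' : ((w.F ∩ A).card : ℝ) ≤ (((w.F \ A) ∩ D₀).card : ℝ) + ((w.G ∩ D₀).card : ℝ)
        + ((D₀N \ (w.F \ A)).card : ℝ) + ((D₀G \ w.G).card : ℝ) := by
      exact_mod_cast h9
    rw [hsplitF, hFA1, h6, h7, h8]
    linarith [h4, h5]


-- ### witnesses against conservativeness

lemma exists_bad_pair (hm : StrictMono mseq) (hn : StrictMono nseq)
    (hdiff : Set.Infinite (symmDiff (Set.range mseq) (Set.range nseq)))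
    (C : ℝ) (hC : 0 < C) :
    ∃ A D : Finset ℕ, (↑A : Set ℕ) ⊆ Set.range mseq ∧ A.card ≤ D.card ∧
      (∀ a ∈ A, ∀ d ∈ D, d ∈ Set.range mseq → a < d) ∧
      C * ‖(theBasis 𝕜 mseq nseq).ones D‖ < ‖(theBasis 𝕜 mseq nseq).ones A‖ := by
  classical
  by_cases hS : (SSet mseq nseq).Infinite
  · -- Case: N \ M infinite
    set p : ℕ → Prop := fun n => n ∈ SSet mseq nseq with hp
    have hp' : (setOf p).Infinite := hS
    set m0 : ℕ := ⌈C⌉₊ with hm0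
    set k : ℕ := 2 * (m0 + 1)^2 with hk
    set Dk : Finset ℕ := (Finset.range (2*k)).image (Nat.nth p) with hDk
    have hDcard : Dk.card = 2*k := by
      rw [hDk, Finset.card_image_of_injective _ (Nat.nth_injective hp'), Finset.card_range]
    have hDmem : ∀ d ∈ Dk, d ∈ SSet mseq nseq := by
      intro d hd
      rw [hDk] at hd
      obtain ⟨i, _, rfl⟩ := Finset.mem_image.1 hd
      exact Nat.nth_mem_of_infinite hp' i
    have hDN : ∀ d ∈ Dk, d ∈ Set.range nseq := fun d hd => (hDmem d hd).1
    have hcount : ∀ i : ℕ, (SSet mseq nseq ∩ Set.Iic (Nat.nth p i)).ncard = i + 1 := by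
      intro i
      have hset : SSet mseq nseq ∩ Set.Iic (Nat.nth p i)
          = ↑((Finset.range (Nat.nth p i + 1)).filter p) := by
        ext t
        constructor
        · rintro ⟨htS, htle⟩
          simp only [Finset.coe_filter, Set.mem_setOf_eq, Finset.mem_range]
          exact ⟨Nat.lt_succ_of_le htle, htS⟩
        · intro ht
          simp only [Finset.coe_filter, Set.mem_setOf_eq, Finset.mem_range] at ht
          exact ⟨ht.2, Set.mem_Iic.2 (Nat.lt_succ_iff.1 ht.1)⟩
      rw [hset, Set.ncard_coe_finset, ← Nat.count_eq_card_filter_range, Nat.count_succ,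
        if_pos (Nat.nth_mem_of_infinite hp' i), Nat.count_nth (fun hf => (hp' hf).elim)]
    have hgD : ∀ d ∈ Dk, g mseq nseq d ≤ Nat.sqrt (2*k) := by
      intro d hd
      rw [hDk] at hd
      obtain ⟨i, hi, rfl⟩ := Finset.mem_image.1 hd
      rw [Finset.mem_range] at hi
      have hgval : g mseq nseq (Nat.nth p i)
          = Nat.sqrt ((SSet mseq nseq ∩ Set.Iic (Nat.nth p i)).ncard) := rfl
      rw [hgval, hcount i]
      exact Nat.sqrt_le_sqrt (by omega)
    -- find Ak
    obtain ⟨Ak, hAkM, hAkcard, hAknorm⟩ : ∃ Ak : Finset ℕ,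
        (↑Ak : Set ℕ) ⊆ Set.range mseq ∧ Ak.card = k
          ∧ (k : ℝ) ≤ ‖(theBasis 𝕜 mseq nseq).ones Ak‖ := by
      by_cases hMN : (Set.range mseq \ Set.range nseq).Infinite
      · obtain ⟨Ak, hsub, hcard⟩ := hMN.exists_subset_card_eq k
        refine ⟨Ak, fun a ha => (hsub ha).1, hcard, ?_⟩
        rw [← hcard]
        exact norm_ones_ge_of_offN mseq nseq Ak (fun a ha => (hsub (Finset.mem_coe.2 ha)).2)
      · have hMinf : (Set.range mseq).Infinite :=
          Set.infinite_range_of_injective hm.injective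
        have hT : (Set.range mseq ∩ Set.range nseq).Infinite := by
          by_contra hfin
          have h2 := (Set.not_infinite.1 hMN).union (Set.not_infinite.1 hfin)
          rw [Set.diff_union_inter] at h2
          exact hMinf h2
        set t₀ : ℕ := Nat.nth p (k*k) with ht₀
        obtain ⟨Ak, hsub, hcard⟩ := (hT.diff (Set.finite_Iic t₀)).exists_subset_card_eq k
        refine ⟨Ak, fun a ha => ((hsub ha).1).1, hcard, ?_⟩
        rw [← hcard]
        apply norm_ones_ge_of_allowed mseq nseq Ak
          (fun a ha => ((hsub (Finset.mem_coe.2 ha)).1).2)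
        intro a ha
        have hta : t₀ < a := by
          have h3 := (hsub (Finset.mem_coe.2 ha)).2
          simpa using h3
        have himg : ↑((Finset.range (k*k+1)).image (Nat.nth p))
            ⊆ SSet mseq nseq ∩ Set.Iic a := by
          intro t ht
          obtain ⟨j, hj, rfl⟩ := Finset.mem_image.1 (Finset.mem_coe.1 ht)
          rw [Finset.mem_range] at hj
          refine ⟨Nat.nth_mem_of_infinite hp' j, Set.mem_Iic.2 ?_⟩
          exact le_trans ((Nat.nth_le_nth hp').2 (Nat.lt_succ_iff.1 hj)) hta.le
        have hcard2 : k*k + 1 ≤ (SSet mseq nseq ∩ Set.Iic a).ncard := by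
          have h1 : ((Finset.range (k*k+1)).image (Nat.nth p)).card = k*k+1 := by
            rw [Finset.card_image_of_injective _ (Nat.nth_injective hp'), Finset.card_range]
          calc k*k+1 = (↑((Finset.range (k*k+1)).image (Nat.nth p)) : Set ℕ).ncard := by
                rw [Set.ncard_coe_finset, h1]
            _ ≤ _ := Set.ncard_le_ncard himg (SSet_inter_finite mseq nseq a)
        rw [hcard]
        exact Nat.le_sqrt.2 (le_trans (Nat.le_succ _) hcard2)
    refine ⟨Ak, Dk, hAkM, ?_, ?_, ?_⟩
    · rw [hAkcard, hDcard]; omega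
    · intro a ha d hd hdM
      exact absurd hdM (hDmem d hd).2
    · have hDle : ‖(theBasis 𝕜 mseq nseq).ones Dk‖ ≤ max 1 ((Nat.sqrt (2*k) : ℕ) : ℝ) :=
        norm_ones_le mseq nseq Dk hDN (Nat.sqrt (2*k)) hgD
      have hsqrt : Nat.sqrt (2*k) = 2*(m0+1) := by
        have : 2*k = (2*(m0+1)) * (2*(m0+1)) := by rw [hk]; ring
        rw [this, Nat.sqrt_eq]
      rw [hsqrt] at hDle
      have hmax : max 1 (((2*(m0+1) : ℕ)) : ℝ) = ((2*(m0+1) : ℕ) : ℝ) := by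
        apply max_eq_right
        exact_mod_cast Nat.one_le_iff_ne_zero.2 (by omega)
      rw [hmax] at hDle
      have hCle : C ≤ (m0 : ℝ) := Nat.le_ceil C
      calc C * ‖(theBasis 𝕜 mseq nseq).ones Dk‖
          ≤ C * ((2*(m0+1) : ℕ) : ℝ) := by
            apply mul_le_mul_of_nonneg_left hDle hC.le
        _ ≤ (m0 : ℝ) * ((2*(m0+1) : ℕ) : ℝ) := by
            apply mul_le_mul_of_nonneg_right hCle (by positivity)
        _ < (k : ℝ) := by
            rw [hk]
            push_cast
            nlinarith
        _ ≤ ‖(theBasis 𝕜 mseq nseq).ones Ak‖ := hAknorm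
  · -- Case: N \ M finite, so M \ N infinite
    have hMN : (Set.range mseq \ Set.range nseq).Infinite := by
      rw [Set.symmDiff_def] at hdiff
      by_contra hfin
      exact hdiff ((Set.not_infinite.1 hfin).union (Set.not_infinite.1 hS))
    set c : ℕ := Nat.sqrt ((SSet mseq nseq).ncard) with hc
    have hgc : ∀ x, g mseq nseq x ≤ c :=
      fun x => Nat.sqrt_le_sqrt
        (Set.ncard_le_ncard Set.inter_subset_left (Set.not_infinite.1 hS))
    set k : ℕ := ⌈C * max 1 (c:ℝ)⌉₊ + 1 with hkdef
    obtain ⟨Ak, hAsub, hAcard⟩ := hMN.exists_subset_card_eq k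
    set t₁ : ℕ := Ak.sup id with ht₁
    have hN : (Set.range nseq).Infinite := Set.infinite_range_of_injective hn.injective
    obtain ⟨Dk, hDsub, hDcard⟩ := (hN.diff (Set.finite_Iic t₁)).exists_subset_card_eq k
    refine ⟨Ak, Dk, fun a ha => (hAsub ha).1, by rw [hAcard, hDcard], ?_, ?_⟩
    · intro a ha d hd _
      have h1 : d ∉ Set.Iic t₁ := (hDsub (Finset.mem_coe.2 hd)).2
      have h2 : t₁ < d := by simpa using h1
      exact lt_of_le_of_lt (Finset.le_sup (f := id) ha) h2
    · have hAnorm : (k : ℝ) ≤ ‖(theBasis 𝕜 mseq nseq).ones Ak‖ := by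
        rw [← hAcard]
        exact norm_ones_ge_of_offN mseq nseq Ak
          (fun a ha => (hAsub (Finset.mem_coe.2 ha)).2)
      have hDnorm : ‖(theBasis 𝕜 mseq nseq).ones Dk‖ ≤ max 1 (c : ℝ) :=
        norm_ones_le mseq nseq Dk (fun d hd => (hDsub (Finset.mem_coe.2 hd)).1) c
          (fun d _ => hgc d)
      have harith : C * max 1 (c:ℝ) < (k : ℝ) := by
        rw [hkdef]
        push_cast
        have := Nat.le_ceil (C * max 1 (c:ℝ))
        linarith
      calc C * ‖(theBasis 𝕜 mseq nseq).ones Dk‖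
          ≤ C * max 1 (c:ℝ) := mul_le_mul_of_nonneg_left hDnorm hC.le
        _ < (k : ℝ) := harith
        _ ≤ _ := hAnorm

end
end Stmt11

/-- If the symmetric difference of 𝐦 and 𝐧 is infinite, there is a Banach
space with a 1-unconditional basis that is 1-(𝐧, PSLC) but not (𝐦, conservative)
(hence not democratic). -/
theorem statement11 {𝕜 : Type*} [RCLike 𝕜] (mseq nseq : ℕ → ℕ)
    (hm : StrictMono mseq) (hn : StrictMono nseq)
    (hdiff : Set.Infinite (symmDiff (Set.range mseq) (Set.range nseq))) :
    ∃ W : BanachWithBasis 𝕜, W.basis.OneUnconditional ∧ W.basis.PSLCWith nseq 1 ∧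
      ¬ W.basis.Conservative mseq ∧ ¬ W.basis.Democratic (fun k => k) := by
  classical
  refine ⟨{ carrier := ↥(Stmt11.Xc 𝕜 mseq nseq), basis := Stmt11.theBasis 𝕜 mseq nseq },
    Stmt11.theBasis_unconditional mseq nseq, Stmt11.theBasis_pslc mseq nseq, ?_, ?_⟩
  · rintro ⟨C, hC0, hC⟩
    obtain ⟨A, D, h1, h2, h3, h4⟩ :=
      Stmt11.exists_bad_pair (𝕜 := 𝕜) mseq nseq hm hn hdiff C hC0
    exact absurd (hC A D ⟨h1, h2, h3⟩) (not_le.2 h4)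
  · rintro ⟨C, hC⟩
    obtain ⟨A, D, h1, h2, h3, h4⟩ :=
      Stmt11.exists_bad_pair (𝕜 := 𝕜) mseq nseq hm hn hdiff (max C 1)
        (lt_of_lt_of_le one_pos (le_max_right _ _))
    have h5 := hC A D ⟨fun a _ => ⟨a, rfl⟩, h2⟩
    have h6 : C * ‖(Stmt11.theBasis 𝕜 mseq nseq).ones D‖
        ≤ max C 1 * ‖(Stmt11.theBasis 𝕜 mseq nseq).ones D‖ :=
      mul_le_mul_of_nonneg_right (le_max_left _ _) (norm_nonneg _)
    have h7 : ‖(Stmt11.theBasis 𝕜 mseq nseq).ones A‖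
        ≤ C * ‖(Stmt11.theBasis 𝕜 mseq nseq).ones D‖ := h5
    linarith
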